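/- Fix m > 0 and e ≠ 0, let φ₀ be a Choquard ground state, and let U, V, F, G be Schwartz-class functions ℝ³ → ℂ². Then 𝔐(U, V) = (F, G) — i.e. 2mU + P̸V = F and P̸U − (1/(2m))V + Â⁰V + 2e²φ₀ N*(φ₀ Re V₁) e₁ = G — holds if and only if U = (1/(2m))(F − P̸V) and, writing V = V₁e₁ + V₂e₂ and G′ = (1/(2m))P̸F − G with components G′₁, G′₂: L₁(Re V₁) = Re G′₁, L₀(Im V₁) = Im G′₁, L₀(Re V₂) = Re G′₂, and L₀(Im V₂) = Im G′₂. In particular the system decouples into scalar equations for the real and imaginary parts of the two components of V. -/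

import Mathlib

open MeasureTheory Real
open scoped ContDiff

noncomputable section

/-- Partial derivative in the `j`-th coordinate direction on `ℝ³`. -/
def pd {E : Type*} [NormedAddCommGroup E] [NormedSpace ℝ E]
    (j : Fin 3) (f : EuclideanSpace ℝ (Fin 3) → E)
    (x : EuclideanSpace ℝ (Fin 3)) : E :=
  fderiv ℝ f x (EuclideanSpace.single j 1)

/-- Laplacian on `ℝ³`, `Δf = Σⱼ ∂ⱼ∂ⱼ f`. -/
def lap {E : Type*} [NormedAddCommGroup E] [NormedSpace ℝ E]
    (f : EuclideanSpace ℝ (Fin 3) → E) (x : EuclideanSpace ℝ (Fin 3)) : E :=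
  ∑ j : Fin 3, pd j (pd j f) x

/-- Convolution with the Newtonian potential `N(x) = 1/(4π|x|)` on `ℝ³`,
for real-valued functions. -/
def Nconv (h : EuclideanSpace ℝ (Fin 3) → ℝ) (x : EuclideanSpace ℝ (Fin 3)) : ℝ :=
  ∫ y, h y / (4 * π * ‖x - y‖)

/-- A Choquard ground state: a strictly positive, spherically symmetric,
Schwartz-class function `φ₀ : ℝ³ → ℝ` with
`(1/(2m))φ₀ − (1/(2m))Δφ₀ − e²(N*φ₀²)φ₀ = 0`. -/
def IsChoquardGroundState (m e : ℝ) (φ₀ : EuclideanSpace ℝ (Fin 3) → ℝ) : Prop :=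
  (∀ x, 0 < φ₀ x) ∧
  (∀ x y : EuclideanSpace ℝ (Fin 3), ‖x‖ = ‖y‖ → φ₀ x = φ₀ y) ∧
  (∃ Φ : SchwartzMap (EuclideanSpace ℝ (Fin 3)) ℝ, ∀ x, Φ x = φ₀ x) ∧
  (∀ x, (1 / (2 * m)) * φ₀ x - (1 / (2 * m)) * lap φ₀ x
      - e ^ 2 * Nconv (fun y => (φ₀ y) ^ 2) x * φ₀ x = 0)

/-- The linearized operator `L₀v = −(1/(2m))Δv + (1/(2m))v − e²(N*φ₀²)v`. -/
def L0 (m e : ℝ) (φ₀ v : EuclideanSpace ℝ (Fin 3) → ℝ)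
    (x : EuclideanSpace ℝ (Fin 3)) : ℝ :=
  -(1 / (2 * m)) * lap v x + (1 / (2 * m)) * v x
    - e ^ 2 * Nconv (fun y => (φ₀ y) ^ 2) x * v x

/-- The linearized operator `L₁v = L₀v − 2e²(N*(φ₀v))φ₀`. -/
def L1 (m e : ℝ) (φ₀ v : EuclideanSpace ℝ (Fin 3) → ℝ)
    (x : EuclideanSpace ℝ (Fin 3)) : ℝ :=
  L0 m e φ₀ v x - 2 * e ^ 2 * Nconv (fun y => φ₀ y * v y) x * φ₀ x

/-- The Pauli matrices `σ₁, σ₂, σ₃`. -/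
def pauli : Fin 3 → Matrix (Fin 2) (Fin 2) ℂ :=
  ![!![0, 1; 1, 0], !![0, -Complex.I; Complex.I, 0], !![1, 0; 0, -1]]

/-- `σ·∇ = σ₁∂₁ + σ₂∂₂ + σ₃∂₃` acting on `f : ℝ³ → ℂ²`. -/
def sigmaDeriv (f : EuclideanSpace ℝ (Fin 3) → Fin 2 → ℂ)
    (x : EuclideanSpace ℝ (Fin 3)) : Fin 2 → ℂ :=
  ∑ j : Fin 3, (pauli j).mulVec (pd j f x)

/-- `P̸ = −i σ·∇`. -/
def Pslash (f : EuclideanSpace ℝ (Fin 3) → Fin 2 → ℂ)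
    (x : EuclideanSpace ℝ (Fin 3)) : Fin 2 → ℂ :=
  (-Complex.I) • sigmaDeriv f x

/-- The operator `𝔐` (derivative of the rescaled Dirac–Maxwell map at the
nonrelativistic limit point):
`𝔐(U,V) = (2mU + P̸V, P̸U − (1/(2m))V + Â⁰V + 2e² φ₀ N*(φ₀ Re V₁) e₁)`,
where `Â⁰ = e²N*φ₀²`, `V₁` is the first component of `V`, `e₁ = (1,0)`. -/
def Mop (m e : ℝ) (φ₀ : EuclideanSpace ℝ (Fin 3) → ℝ)
    (U V : EuclideanSpace ℝ (Fin 3) → Fin 2 → ℂ) :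
    (EuclideanSpace ℝ (Fin 3) → Fin 2 → ℂ) ×
      (EuclideanSpace ℝ (Fin 3) → Fin 2 → ℂ) :=
  (fun x => ((2 * m : ℝ) : ℂ) • U x + Pslash V x,
   fun x => Pslash U x - ((1 / (2 * m) : ℝ) : ℂ) • V x
     + ((e ^ 2 * Nconv (fun y => (φ₀ y) ^ 2) x : ℝ) : ℂ) • V x
     + ((2 * e ^ 2 * Nconv (fun y => φ₀ y * (V y 0).re) x * φ₀ x : ℝ) : ℂ) •
         (![1, 0] : Fin 2 → ℂ))

section helpers

lemma two_le_inf : (2 : WithTop ℕ∞) ≤ ∞ := by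
  have : ((2:ℕ∞) : WithTop ℕ∞) ≤ ((⊤:ℕ∞) : WithTop ℕ∞) := WithTop.coe_le_coe.mpr le_top
  simpa using this

lemma one_le_inf : (1 : WithTop ℕ∞) ≤ ∞ := by
  have : ((1:ℕ∞) : WithTop ℕ∞) ≤ ((⊤:ℕ∞) : WithTop ℕ∞) := WithTop.coe_le_coe.mpr le_top
  simpa using this

lemma inf_add_one_le : ∞ + 1 ≤ ∞ := by
  have : ((⊤:ℕ∞) : WithTop ℕ∞) + ((1:ℕ∞) : WithTop ℕ∞) ≤ ((⊤:ℕ∞) : WithTop ℕ∞) := by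
    rw [← WithTop.coe_add]
    exact WithTop.coe_le_coe.mpr (by simp)
  simpa using this


variable {E₂ E₃ : Type*} [NormedAddCommGroup E₂] [NormedSpace ℝ E₂]
  [NormedAddCommGroup E₃] [NormedSpace ℝ E₃]

lemma pd_clm (L : E₂ →L[ℝ] E₃) {f : EuclideanSpace ℝ (Fin 3) → E₂}
    {x : EuclideanSpace ℝ (Fin 3)} (hf : DifferentiableAt ℝ f x) (j : Fin 3) :
    pd j (fun y => L (f y)) x = L (pd j f x) := by
  unfold pd
  have : fderiv ℝ (fun y => L (f y)) x = L.comp (fderiv ℝ f x) := by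
    rw [show (fun y => L (f y)) = (L : E₂ → E₃) ∘ f from rfl,
      fderiv_comp x L.differentiableAt hf, L.fderiv]
  rw [this]; rfl

lemma contDiff_pd {f : EuclideanSpace ℝ (Fin 3) → E₂} (hf : ContDiff ℝ ∞ f) (j : Fin 3) :
    ContDiff ℝ ∞ (pd j f) := by
  have h1 : ContDiff ℝ ∞ (fderiv ℝ f) := hf.fderiv_right inf_add_one_le
  exact h1.clm_apply contDiff_const

lemma pd_pd_symm {f : EuclideanSpace ℝ (Fin 3) → E₂} (hf : ContDiff ℝ ∞ f) (i j : Fin 3)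
    (x : EuclideanSpace ℝ (Fin 3)) :
    pd i (pd j f) x = pd j (pd i f) x := by
  have hsymm : IsSymmSndFDerivAt ℝ f x :=
    hf.contDiffAt.isSymmSndFDerivAt (by rw [minSmoothness_of_isRCLikeNormedField]; exact two_le_inf)
  have hd : DifferentiableAt ℝ (fderiv ℝ f) x :=
    ((hf.fderiv_right inf_add_one_le).differentiable (lt_of_lt_of_le zero_lt_one one_le_inf).ne') x
  have key : ∀ k l : Fin 3, pd k (pd l f) x
      = fderiv ℝ (fderiv ℝ f) x (EuclideanSpace.single k 1) (EuclideanSpace.single l 1) := by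
    intro k l
    have : pd l f = fun y => (ContinuousLinearMap.apply ℝ E₂ (EuclideanSpace.single l 1))
        (fderiv ℝ f y) := rfl
    rw [this, pd_clm _ hd]
    rfl
  rw [key i j, key j i]
  exact hsymm _ _
end helpers

section part2
variable {E₂ : Type*} [NormedAddCommGroup E₂] [NormedSpace ℝ E₂]

lemma pd_sub {f g : EuclideanSpace ℝ (Fin 3) → E₂} {x : EuclideanSpace ℝ (Fin 3)}
    (hf : DifferentiableAt ℝ f x) (hg : DifferentiableAt ℝ g x) (j : Fin 3) :
    pd j (fun y => f y - g y) x = pd j f x - pd j g x := by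
  unfold pd; rw [fderiv_fun_sub hf hg]; rfl

lemma pd_csmul {f : EuclideanSpace ℝ (Fin 3) → Fin 2 → ℂ} {x : EuclideanSpace ℝ (Fin 3)}
    (hf : DifferentiableAt ℝ f x) (c : ℂ) (j : Fin 3) :
    pd j (fun y => c • f y) x = c • pd j f x := by
  unfold pd; rw [fderiv_fun_const_smul hf c]; rfl

lemma pd_sum {ι : Type*} (s : Finset ι) {f : ι → EuclideanSpace ℝ (Fin 3) → E₂}
    {x : EuclideanSpace ℝ (Fin 3)} (hf : ∀ i ∈ s, DifferentiableAt ℝ (f i) x) (j : Fin 3) :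
    pd j (fun y => ∑ i ∈ s, f i y) x = ∑ i ∈ s, pd j (f i) x := by
  unfold pd; rw [fderiv_fun_sum hf, ContinuousLinearMap.sum_apply]

end part2


def mulVecCLM (A : Matrix (Fin 2) (Fin 2) ℂ) : (Fin 2 → ℂ) →L[ℝ] (Fin 2 → ℂ) :=
  LinearMap.toContinuousLinearMap ((Matrix.mulVecLin A).restrictScalars ℝ)

@[simp] lemma mulVecCLM_apply (A : Matrix (Fin 2) (Fin 2) ℂ) (v : Fin 2 → ℂ) :
    mulVecCLM A v = A.mulVec v := rfl

lemma pauli_sq (j : Fin 3) : pauli j * pauli j = 1 := by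
  fin_cases j <;>
    simp [pauli, Matrix.mul_fin_two, Matrix.one_fin_two, Complex.I_mul_I] <;> norm_num

lemma pauli_anticomm01 : pauli 0 * pauli 1 + pauli 1 * pauli 0 = 0 := by
  simp [pauli, Matrix.mul_fin_two]; norm_num [Matrix.one_fin_two]; ext i k; fin_cases i <;> fin_cases k <;> simp

lemma pauli_anticomm02 : pauli 0 * pauli 2 + pauli 2 * pauli 0 = 0 := by
  simp [pauli, Matrix.mul_fin_two]; norm_num [Matrix.one_fin_two]; ext i k; fin_cases i <;> fin_cases k <;> simp

lemma pauli_anticomm12 : pauli 1 * pauli 2 + pauli 2 * pauli 1 = 0 := by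
  simp [pauli, Matrix.mul_fin_two]; norm_num [Matrix.one_fin_two]; ext i k; fin_cases i <;> fin_cases k <;> simp




section part3

variable {f g : EuclideanSpace ℝ (Fin 3) → Fin 2 → ℂ} {x : EuclideanSpace ℝ (Fin 3)}

lemma sigmaDeriv_eq (f : EuclideanSpace ℝ (Fin 3) → Fin 2 → ℂ) :
    sigmaDeriv f = fun x => ∑ j : Fin 3, mulVecCLM (pauli j) (pd j f x) := rfl

lemma contDiff_sigmaDeriv (hf : ContDiff ℝ ∞ f) : ContDiff ℝ ∞ (sigmaDeriv f) := by
  rw [sigmaDeriv_eq]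
  exact ContDiff.sum fun j _ => (mulVecCLM (pauli j)).contDiff.comp (contDiff_pd hf j)

lemma contDiff_Pslash (hf : ContDiff ℝ ∞ f) : ContDiff ℝ ∞ (Pslash f) :=
  (contDiff_sigmaDeriv hf).const_smul (-Complex.I)

lemma pd_sigmaDeriv (hf : ContDiff ℝ ∞ f) (k : Fin 3) :
    pd k (sigmaDeriv f) x = ∑ j : Fin 3, (pauli j).mulVec (pd k (pd j f) x) := by
  have hdf : ∀ j : Fin 3, DifferentiableAt ℝ
      (fun y => mulVecCLM (pauli j) (pd j f y)) x := fun j =>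
    ((mulVecCLM (pauli j)).differentiable.comp
      ((contDiff_pd hf j).differentiable (lt_of_lt_of_le zero_lt_one one_le_inf).ne')).differentiableAt
  rw [sigmaDeriv_eq, pd_sum Finset.univ (fun j _ => hdf j) k]
  refine Finset.sum_congr rfl fun j _ => ?_
  rw [pd_clm (mulVecCLM (pauli j)) ((contDiff_pd hf j).differentiable (lt_of_lt_of_le zero_lt_one one_le_inf).ne' x) k]
  rfl

lemma sigmaDeriv_sigmaDeriv (hf : ContDiff ℝ ∞ f) :
    sigmaDeriv (sigmaDeriv f) x = lap f x := by
  have expand : sigmaDeriv (sigmaDeriv f) x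
      = ∑ k : Fin 3, ∑ j : Fin 3, (pauli k * pauli j).mulVec (pd k (pd j f) x) := by
    unfold sigmaDeriv
    refine Finset.sum_congr rfl fun k _ => ?_
    rw [show pd k (fun x => ∑ j : Fin 3, (pauli j).mulVec (pd j f x)) x
        = ∑ j : Fin 3, (pauli j).mulVec (pd k (pd j f) x) from pd_sigmaDeriv hf k]
    rw [show (pauli k).mulVec (∑ j : Fin 3, (pauli j).mulVec (pd k (pd j f) x))
        = mulVecCLM (pauli k) (∑ j : Fin 3, (pauli j).mulVec (pd k (pd j f) x)) from rfl,
      map_sum]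
    exact Finset.sum_congr rfl fun j _ => by
      simp only [mulVecCLM_apply, Matrix.mulVec_mulVec]
  rw [expand]
  have hsym : ∀ k j : Fin 3, pd k (pd j f) x = pd j (pd k f) x := fun k j => pd_pd_symm hf k j x
  unfold lap
  simp only [Fin.sum_univ_three]
  rw [show pd 1 (pd 0 f) x = pd 0 (pd 1 f) x from hsym 1 0,
    show pd 2 (pd 0 f) x = pd 0 (pd 2 f) x from hsym 2 0,
    show pd 2 (pd 1 f) x = pd 1 (pd 2 f) x from hsym 2 1]
  rw [show (pauli 0 * pauli 0).mulVec (pd 0 (pd 0 f) x) = pd 0 (pd 0 f) x from by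
      rw [pauli_sq, Matrix.one_mulVec],
    show (pauli 1 * pauli 1).mulVec (pd 1 (pd 1 f) x) = pd 1 (pd 1 f) x from by
      rw [pauli_sq, Matrix.one_mulVec],
    show (pauli 2 * pauli 2).mulVec (pd 2 (pd 2 f) x) = pd 2 (pd 2 f) x from by
      rw [pauli_sq, Matrix.one_mulVec]]
  rw [show (pauli 0 * pauli 1).mulVec (pd 0 (pd 1 f) x)
      = -((pauli 1 * pauli 0).mulVec (pd 0 (pd 1 f) x)) from by
      rw [eq_neg_iff_add_eq_zero, ← Matrix.add_mulVec, pauli_anticomm01, Matrix.zero_mulVec],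
    show (pauli 0 * pauli 2).mulVec (pd 0 (pd 2 f) x)
      = -((pauli 2 * pauli 0).mulVec (pd 0 (pd 2 f) x)) from by
      rw [eq_neg_iff_add_eq_zero, ← Matrix.add_mulVec, pauli_anticomm02, Matrix.zero_mulVec],
    show (pauli 1 * pauli 2).mulVec (pd 1 (pd 2 f) x)
      = -((pauli 2 * pauli 1).mulVec (pd 1 (pd 2 f) x)) from by
      rw [eq_neg_iff_add_eq_zero, ← Matrix.add_mulVec, pauli_anticomm12, Matrix.zero_mulVec]]
  abel

end part3

section part4
variable {f g : EuclideanSpace ℝ (Fin 3) → Fin 2 → ℂ} {x : EuclideanSpace ℝ (Fin 3)}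

lemma sigmaDeriv_csmul (hf : DifferentiableAt ℝ f x) (c : ℂ) :
    sigmaDeriv (fun y => c • f y) x = c • sigmaDeriv f x := by
  unfold sigmaDeriv
  rw [Finset.smul_sum]
  refine Finset.sum_congr rfl fun j _ => ?_
  rw [pd_csmul hf c j, Matrix.mulVec_smul]

lemma sigmaDeriv_sub (hf : DifferentiableAt ℝ f x) (hg : DifferentiableAt ℝ g x) :
    sigmaDeriv (fun y => f y - g y) x = sigmaDeriv f x - sigmaDeriv g x := by
  unfold sigmaDeriv
  rw [← Finset.sum_sub_distrib]
  refine Finset.sum_congr rfl fun j _ => ?_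
  rw [pd_sub hf hg j]
  exact map_sub (mulVecCLM (pauli j)) _ _

lemma Pslash_smul_sub (c : ℂ) (hf : DifferentiableAt ℝ f x) (hg : DifferentiableAt ℝ g x) :
    Pslash (fun y => c • (f y - g y)) x = c • (Pslash f x - Pslash g x) := by
  unfold Pslash
  rw [show (fun y => c • (f y - g y)) = (fun y => c • ((fun z => f z - g z) y)) from rfl,
    sigmaDeriv_csmul (f := fun z => f z - g z) (hf.sub hg) c, sigmaDeriv_sub hf hg, smul_comm, smul_sub]

lemma Pslash_Pslash (hf : ContDiff ℝ ∞ f) : Pslash (Pslash f) x = -lap f x := by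
  unfold Pslash
  rw [sigmaDeriv_csmul ((contDiff_sigmaDeriv hf).differentiable (lt_of_lt_of_le zero_lt_one one_le_inf).ne' x) (-Complex.I),
    sigmaDeriv_sigmaDeriv hf, smul_smul]
  norm_num [Complex.I_mul_I]

lemma lap_clm {E₂ E₃ : Type*} [NormedAddCommGroup E₂] [NormedSpace ℝ E₂]
    [NormedAddCommGroup E₃] [NormedSpace ℝ E₃] (L : E₂ →L[ℝ] E₃)
    {f : EuclideanSpace ℝ (Fin 3) → E₂} (hf : ContDiff ℝ ∞ f) (x : EuclideanSpace ℝ (Fin 3)) :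
    lap (fun y => L (f y)) x = L (lap f x) := by
  unfold lap
  rw [map_sum]
  refine Finset.sum_congr rfl fun j _ => ?_
  have h1 : pd j (fun y => L (f y)) = fun y => L (pd j f y) :=
    funext fun y => pd_clm L ((hf.differentiable (lt_of_lt_of_le zero_lt_one one_le_inf).ne') y) j
  rw [h1, pd_clm L ((contDiff_pd hf j).differentiable (lt_of_lt_of_le zero_lt_one one_le_inf).ne' x) j]

lemma lap_re_comp (hf : ContDiff ℝ ∞ f) (i : Fin 2) (x : EuclideanSpace ℝ (Fin 3)) :
    lap (fun y => (f y i).re) x = (lap f x i).re :=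
  lap_clm (Complex.reCLM.comp (ContinuousLinearMap.proj (R := ℝ) (φ := fun _ : Fin 2 => ℂ) i))
    hf x

lemma lap_im_comp (hf : ContDiff ℝ ∞ f) (i : Fin 2) (x : EuclideanSpace ℝ (Fin 3)) :
    lap (fun y => (f y i).im) x = (lap f x i).im :=
  lap_clm (Complex.imCLM.comp (ContinuousLinearMap.proj (R := ℝ) (φ := fun _ : Fin 2 => ℂ) i))
    hf x

end part4

/-- solving `𝔐(U,V) = (F,G)` for Schwartz data is equivalent
to `U = (1/(2m))(F − P̸V)` together with the decoupled scalar equations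
`L₁(Re V₁) = Re G′₁`, `L₀(Im V₁) = Im G′₁`, `L₀(Re V₂) = Re G′₂`,
`L₀(Im V₂) = Im G′₂`, where `G′ = (1/(2m))P̸F − G`. -/
theorem Mop_equation_decouples
    (m e : ℝ) (hm : 0 < m) (he : e ≠ 0)
    (φ₀ : EuclideanSpace ℝ (Fin 3) → ℝ)
    (hφ₀ : IsChoquardGroundState m e φ₀)
    (U V F G : SchwartzMap (EuclideanSpace ℝ (Fin 3)) (Fin 2 → ℂ))
    (G' : EuclideanSpace ℝ (Fin 3) → Fin 2 → ℂ)
    (hG' : ∀ x, G' x = ((1 / (2 * m) : ℝ) : ℂ) • Pslash (⇑F) x - G x) :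
    ((∀ x, (Mop m e φ₀ (⇑U) (⇑V)).1 x = F x) ∧
     (∀ x, (Mop m e φ₀ (⇑U) (⇑V)).2 x = G x))
    ↔
    ((∀ x, U x = ((1 / (2 * m) : ℝ) : ℂ) • (F x - Pslash (⇑V) x)) ∧
     (∀ x, L1 m e φ₀ (fun y => (V y 0).re) x = (G' x 0).re) ∧
     (∀ x, L0 m e φ₀ (fun y => (V y 0).im) x = (G' x 0).im) ∧
     (∀ x, L0 m e φ₀ (fun y => (V y 1).re) x = (G' x 1).re) ∧
     (∀ x, L0 m e φ₀ (fun y => (V y 1).im) x = (G' x 1).im)) := by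
  have hm2 : (2 * m) ≠ 0 := by positivity
  have hV : ContDiff ℝ ∞ (⇑V) := V.smooth ⊤
  have hF : ContDiff ℝ ∞ (⇑F) := F.smooth ⊤
  have eq1_iff : (∀ x, (Mop m e φ₀ (⇑U) (⇑V)).1 x = F x)
      ↔ (∀ x, U x = ((1 / (2 * m) : ℝ) : ℂ) • (F x - Pslash (⇑V) x)) := by
    constructor
    · intro h x
      rw [← h x]
      simp only [Mop]
      rw [add_sub_cancel_right, smul_smul, ← Complex.ofReal_mul]
      rw [show (1 / (2 * m)) * (2 * m) = 1 by field_simp]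
      simp
    · intro h x
      simp only [Mop]
      rw [h x, smul_smul, ← Complex.ofReal_mul,
        show (2 * m) * (1 / (2 * m)) = 1 by field_simp]
      simp
  have key : (∀ x, U x = ((1 / (2 * m) : ℝ) : ℂ) • (F x - Pslash (⇑V) x)) →
      ((∀ x, (Mop m e φ₀ (⇑U) (⇑V)).2 x = G x) ↔
        ((∀ x, L1 m e φ₀ (fun y => (V y 0).re) x = (G' x 0).re) ∧
         (∀ x, L0 m e φ₀ (fun y => (V y 0).im) x = (G' x 0).im) ∧
         (∀ x, L0 m e φ₀ (fun y => (V y 1).re) x = (G' x 1).re) ∧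
         (∀ x, L0 m e φ₀ (fun y => (V y 1).im) x = (G' x 1).im))) := by
    intro hU
    have hPU : ∀ x, Pslash (⇑U) x
        = ((1 / (2 * m) : ℝ) : ℂ) • Pslash (⇑F) x
          + ((1 / (2 * m) : ℝ) : ℂ) • lap (⇑V) x := by
      intro x
      have hUfun : ⇑U = fun y => ((1 / (2 * m) : ℝ) : ℂ) • (F y - Pslash (⇑V) y) :=
        funext hU
      rw [hUfun, Pslash_smul_sub _ (hF.differentiable (lt_of_lt_of_le zero_lt_one one_le_inf).ne' x)
        ((contDiff_Pslash hV).differentiable (lt_of_lt_of_le zero_lt_one one_le_inf).ne' x), Pslash_Pslash hV,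
        sub_neg_eq_add, smul_add]
    have hpt : ∀ x, ((Mop m e φ₀ (⇑U) (⇑V)).2 x = G x) ↔
        ((L1 m e φ₀ (fun y => (V y 0).re) x = (G' x 0).re) ∧
         (L0 m e φ₀ (fun y => (V y 0).im) x = (G' x 0).im) ∧
         (L0 m e φ₀ (fun y => (V y 1).re) x = (G' x 1).re) ∧
         (L0 m e φ₀ (fun y => (V y 1).im) x = (G' x 1).im)) := by
      intro x
      simp only [Mop]
      rw [hPU x, hG' x, funext_iff, Fin.forall_fin_two]
      simp only [L0, L1]
      rw [lap_re_comp hV 0 x, lap_im_comp hV 0 x, lap_re_comp hV 1 x, lap_im_comp hV 1 x]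
      simp only [Pi.add_apply, Pi.sub_apply, Pi.smul_apply, smul_eq_mul,
        Matrix.cons_val_zero, Matrix.cons_val_one, Matrix.head_cons,
        Complex.ext_iff, Complex.add_re, Complex.add_im, Complex.sub_re, Complex.sub_im,
        Complex.mul_re, Complex.mul_im, Complex.ofReal_re, Complex.ofReal_im,
        Complex.one_re, Complex.one_im, Complex.zero_re, Complex.zero_im,
        zero_mul, mul_zero, mul_one, sub_zero, add_zero, zero_add]
      constructor
      · rintro ⟨⟨a1, a2⟩, b1, b2⟩
        exact ⟨by linarith, by linarith, by linarith, by linarith⟩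
      · rintro ⟨a1, a2, a3, a4⟩
        exact ⟨⟨by linarith, by linarith⟩, by linarith, by linarith⟩
    constructor
    · intro h
      exact ⟨fun x => ((hpt x).1 (h x)).1, fun x => ((hpt x).1 (h x)).2.1,
        fun x => ((hpt x).1 (h x)).2.2.1, fun x => ((hpt x).1 (h x)).2.2.2⟩
    · rintro ⟨h1, h2, h3, h4⟩ x
      exact (hpt x).2 ⟨h1 x, h2 x, h3 x, h4 x⟩
  constructor
  · rintro ⟨h1, h2⟩
    have hU := eq1_iff.1 h1
    obtain ⟨s1, s2, s3, s4⟩ := (key hU).1 h2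
    exact ⟨hU, s1, s2, s3, s4⟩
  · rintro ⟨hU, s1, s2, s3, s4⟩
    exact ⟨eq1_iff.2 hU, (key hU).2 ⟨s1, s2, s3, s4⟩⟩
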